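/- Let C be a channel from a finite set X to a finite set Y, let π be a prior on X, and let Obs₁ : Y → Z₁ and Obs₂ : Y → Z₂ be observers such that Obs₁ is composition-refined by Obs₂ (there exists a channel R : Z₂ → Z₁ with Obs₁ = Obs₂ · R). Then the observed mutual information satisfies I(π, C·Obs₁) ≤ I(π, C·Obs₂). -/

import Mathlib

open scoped Classical BigOperators

noncomputable section

/-- A (row-stochastic) channel matrix. -/
def IsChannel {X Y : Type*} [Fintype Y] (C : X → Y → ℝ) : Prop :=
  (∀ x y, 0 ≤ C x y) ∧ ∀ x, ∑ y, C x y = 1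

/-- A prior (probability distribution). -/
def IsPrior {X : Type*} [Fintype X] (π : X → ℝ) : Prop :=
  (∀ x, 0 ≤ π x) ∧ ∑ x, π x = 1

/-- Cascade composition of channels (matrix product). -/
def cascade {X Y Z : Type*} [Fintype Y] (C : X → Y → ℝ) (D : Y → Z → ℝ) : X → Z → ℝ :=
  fun x z => ∑ y, C x y * D y z

/-- Mutual information (base-2), with `0`-probability terms taken to be `0`. -/
def MI {X Y : Type*} [Fintype X] [Fintype Y] (π : X → ℝ) (C : X → Y → ℝ) : ℝ :=
  ∑ x, ∑ y, if π x * C x y = 0 then 0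
    else π x * C x y * Real.logb 2 (C x y / ∑ x', π x' * C x' y)

/-- Prior vulnerability. -/
def Vprior {X : Type*} [Fintype X] [Nonempty X] (π : X → ℝ) : ℝ :=
  Finset.univ.sup' Finset.univ_nonempty π

/-- Posterior vulnerability. -/
def Vpost {X Y : Type*} [Fintype X] [Nonempty X] [Fintype Y]
    (π : X → ℝ) (C : X → Y → ℝ) : ℝ :=
  ∑ y, Finset.univ.sup' Finset.univ_nonempty (fun x => π x * C x y)

/-- Min-entropy leakage. -/
def MEL {X Y : Type*} [Fintype X] [Nonempty X] [Fintype Y]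
    (π : X → ℝ) (C : X → Y → ℝ) : ℝ :=
  Real.logb 2 (Vpost π C) - Real.logb 2 (Vprior π)

/-- Min-capacity: supremum of min-entropy leakage over all priors. -/
def MinCap {X Y : Type*} [Fintype X] [Nonempty X] [Fintype Y] (C : X → Y → ℝ) : ℝ :=
  sSup {l : ℝ | ∃ π : X → ℝ, IsPrior π ∧ l = MEL π C}

/-- A deterministic observer: every matrix entry is `0` or `1`. -/
def IsDeterministic {Y Z : Type*} (Obs : Y → Z → ℝ) : Prop :=
  ∀ y z, Obs y z = 0 ∨ Obs y z = 1

/-- A `∼`-observer for the relation `r`. -/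
def IsSimObserver {Y Z : Type*} (r : Y → Y → Prop) (Obs : Y → Z → ℝ) : Prop :=
  ∀ y₁ y₂, r y₁ y₂ ↔ ∀ z, Obs y₁ z = Obs y₂ z

namespace RefObsAux

/-- KL-style term with zero convention. -/
noncomputable def kl (a b : ℝ) : ℝ := if a = 0 then 0 else a * Real.log (a / b)

lemma kl_zero (b : ℝ) : kl 0 b = 0 := by simp [kl]

lemma kl_mul_right (a b t : ℝ) (ht : 0 ≤ t) : kl (a * t) (b * t) = t * kl a b := by
  rcases ht.eq_or_lt with h | h
  · simp [kl, ← h]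
  · by_cases ha : a = 0
    · simp [kl, ha]
    · have hne : a * t ≠ 0 := mul_ne_zero ha h.ne'
      simp only [kl, ha, hne, if_false, mul_div_mul_right _ _ h.ne']
      ring

lemma kl_sum_le {ι : Type*} (s : Finset ι) (a b : ι → ℝ)
    (ha : ∀ i ∈ s, 0 ≤ a i) (hb : ∀ i ∈ s, 0 ≤ b i)
    (hab : ∀ i ∈ s, b i = 0 → a i = 0) :
    kl (∑ i ∈ s, a i) (∑ i ∈ s, b i) ≤ ∑ i ∈ s, kl (a i) (b i) := by
  set A := ∑ i ∈ s, a i with hAdef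
  set B := ∑ i ∈ s, b i with hBdef
  by_cases hA : A = 0
  · have h0 : ∀ i ∈ s, a i = 0 := (Finset.sum_eq_zero_iff_of_nonneg ha).1 hA
    have hr : ∑ i ∈ s, kl (a i) (b i) = 0 :=
      Finset.sum_eq_zero fun i hi => by simp [kl, h0 i hi]
    rw [hr, hA, kl_zero]
  · have hApos : 0 < A := lt_of_le_of_ne (Finset.sum_nonneg ha) (Ne.symm hA)
    have hB : B ≠ 0 := by
      intro h
      have h0 : ∀ i ∈ s, b i = 0 := (Finset.sum_eq_zero_iff_of_nonneg hb).1 h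
      exact hA (Finset.sum_eq_zero fun i hi => hab i hi (h0 i hi))
    have hBpos : 0 < B := lt_of_le_of_ne (Finset.sum_nonneg hb) (Ne.symm hB)
    set L := Real.log (A / B) with hL
    have key : ∀ i ∈ s, a i - b i * (A / B) ≤
        kl (a i) (b i) - (if a i = 0 then 0 else a i * L) := by
      intro i hi
      by_cases hai : a i = 0
      · have hnn : 0 ≤ b i * (A / B) :=
          mul_nonneg (hb i hi) (div_nonneg hApos.le hBpos.le)
        simp only [kl, if_pos hai]
        rw [hai]
        linarith
      · have hapos : 0 < a i := lt_of_le_of_ne (ha i hi) (Ne.symm hai)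
        have hbpos : 0 < b i := by
          rcases (hb i hi).eq_or_lt with h | h
          · exact absurd (hab i hi h.symm) hai
          · exact h
        simp only [kl, hai, if_false]
        have hdiff : a i * Real.log (a i / b i) - a i * L
            = a i * Real.log ((a i / b i) / (A / B)) := by
          have hld : Real.log ((a i / b i) / (A / B))
              = Real.log (a i / b i) - Real.log (A / B) :=
            Real.log_div (by positivity) (by positivity)
          rw [hld, hL]
          ring
        rw [hdiff]
        set t : ℝ := (a i / b i) / (A / B) with htdef
        have htpos : 0 < t := by positivity
        have hlog : 1 - t⁻¹ ≤ Real.log t := by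
          have := Real.log_le_sub_one_of_pos (inv_pos.2 htpos)
          rw [Real.log_inv] at this
          linarith
        have hmul : a i * (1 - t⁻¹) ≤ a i * Real.log t :=
          mul_le_mul_of_nonneg_left hlog hapos.le
        have hval : a i * (1 - t⁻¹) = a i - b i * (A / B) := by
          rw [htdef]
          field_simp
        linarith [hval ▸ hmul]
    have hsum := Finset.sum_le_sum key
    have h1 : ∑ i ∈ s, (a i - b i * (A / B)) = 0 := by
      rw [Finset.sum_sub_distrib, ← Finset.sum_mul, ← hAdef, ← hBdef]
      field_simp
      ring
    have h2 : ∑ i ∈ s, (if a i = 0 then 0 else a i * L)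
        = A * L := by
      rw [hAdef, Finset.sum_mul]
      refine Finset.sum_congr rfl fun i hi => ?_
      by_cases hai : a i = 0 <;> simp [hai]
    have h3 : kl A B = A * L := by simp [kl, hA, hL]
    have hsplit : ∑ i ∈ s, (kl (a i) (b i) - if a i = 0 then 0 else a i * L)
        = (∑ i ∈ s, kl (a i) (b i)) - ∑ i ∈ s, (if a i = 0 then 0 else a i * L) :=
      Finset.sum_sub_distrib _ _
    have h1' : (0:ℝ) ≤ ∑ i ∈ s, (kl (a i) (b i) - if a i = 0 then 0 else a i * L) := by
      calc (0:ℝ) = ∑ i ∈ s, (a i - b i * (A / B)) := h1.symm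
        _ ≤ _ := hsum
    rw [hsplit, h2] at h1'
    linarith [h3]

end RefObsAux

lemma MI_eq_kl {X Y : Type*} [Fintype X] [Fintype Y] (π : X → ℝ) (C : X → Y → ℝ) :
    MI π C = (Real.log 2)⁻¹ *
      ∑ x, ∑ y, RefObsAux.kl (π x * C x y) (π x * ∑ x', π x' * C x' y) := by
  rw [MI, Finset.mul_sum]
  refine Finset.sum_congr rfl fun x _ => ?_
  rw [Finset.mul_sum]
  refine Finset.sum_congr rfl fun y _ => ?_
  by_cases h : π x * C x y = 0
  · simp [h, RefObsAux.kl]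
  · have hπx : π x ≠ 0 := fun hh => h (by rw [hh]; ring)
    simp only [RefObsAux.kl, h, if_neg h, if_false]
    rw [mul_div_mul_left _ _ hπx, Real.logb]
    ring

/-- a composition-refined observer observes no more mutual
information. -/
theorem refined_observer_MI_le
    {X Y Z₁ Z₂ : Type*} [Fintype X] [Fintype Y] [Fintype Z₁] [Fintype Z₂]
    (C : X → Y → ℝ) (hC : IsChannel C)
    (π : X → ℝ) (hπ : IsPrior π)
    (Obs₁ : Y → Z₁ → ℝ) (Obs₂ : Y → Z₂ → ℝ)
    (hO₁ : IsChannel Obs₁) (hO₂ : IsChannel Obs₂)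
    (href : ∃ R : Z₂ → Z₁ → ℝ, IsChannel R ∧ Obs₁ = cascade Obs₂ R) :
    MI π (cascade C Obs₁) ≤ MI π (cascade C Obs₂) := by
  obtain ⟨R, hR, hEq⟩ := href
  -- D is the channel from X to Z₂
  set D : X → Z₂ → ℝ := cascade C Obs₂ with hD
  have hDnn : ∀ x z, 0 ≤ D x z := fun x z =>
    Finset.sum_nonneg fun y _ => mul_nonneg (hC.1 x y) (hO₂.1 y z)
  -- cascade C Obs₁ = cascade D R
  have hassoc : cascade C Obs₁ = cascade D R := by
    funext x z
    rw [hEq]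
    simp only [cascade, hD, Finset.mul_sum, Finset.sum_mul]
    rw [Finset.sum_comm]
    exact Finset.sum_congr rfl fun z2 _ => Finset.sum_congr rfl fun y _ => by ring
  rw [hassoc, MI_eq_kl, MI_eq_kl]
  have hlog2 : (0:ℝ) ≤ (Real.log 2)⁻¹ := inv_nonneg.2 (Real.log_nonneg one_le_two)
  refine mul_le_mul_of_nonneg_left ?_ hlog2
  refine Finset.sum_le_sum fun x _ => ?_
  -- define marginal on Z₂
  set q : Z₂ → ℝ := fun z => ∑ x', π x' * D x' z with hq
  have hqnn : ∀ z, 0 ≤ q z := fun z =>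
    Finset.sum_nonneg fun x' _ => mul_nonneg (hπ.1 x') (hDnn x' z)
  calc ∑ z1, RefObsAux.kl (π x * cascade D R x z1)
        (π x * ∑ x', π x' * cascade D R x' z1)
      = ∑ z1, RefObsAux.kl (∑ z2, (π x * D x z2) * R z2 z1)
          (∑ z2, (π x * q z2) * R z2 z1) := by
        refine Finset.sum_congr rfl fun z1 _ => ?_
        have ha : π x * cascade D R x z1 = ∑ z2, (π x * D x z2) * R z2 z1 := by
          simp only [cascade, Finset.mul_sum]
          exact Finset.sum_congr rfl fun z2 _ => by ring
        have hbm : (π x * ∑ x', π x' * cascade D R x' z1)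
            = ∑ z2, (π x * q z2) * R z2 z1 := by
          have h1 : ∀ x', π x' * cascade D R x' z1
              = ∑ z2, (π x' * D x' z2) * R z2 z1 := fun x' => by
            simp only [cascade, Finset.mul_sum]
            exact Finset.sum_congr rfl fun z2 _ => by ring
          simp_rw [h1]
          rw [Finset.sum_comm, Finset.mul_sum]
          refine Finset.sum_congr rfl fun z2 _ => ?_
          rw [← Finset.sum_mul]
          simp only [hq]
          ring
        rw [ha, hbm]
    _ ≤ ∑ z1, ∑ z2, RefObsAux.kl ((π x * D x z2) * R z2 z1)
          ((π x * q z2) * R z2 z1) := by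
        refine Finset.sum_le_sum fun z1 _ => ?_
        refine RefObsAux.kl_sum_le _ _ _
          (fun z2 _ => mul_nonneg (mul_nonneg (hπ.1 x) (hDnn x z2)) (hR.1 z2 z1))
          (fun z2 _ => mul_nonneg (mul_nonneg (hπ.1 x) (hqnn z2)) (hR.1 z2 z1)) ?_
        intro z2 _ hb
        rcases mul_eq_zero.1 hb with hb | hb
        · rcases mul_eq_zero.1 hb with hb | hb
          · rw [hb]; ring
          · have : π x * D x z2 = 0 := by
              have h0 : ∀ x' ∈ Finset.univ, π x' * D x' z2 = 0 :=
                (Finset.sum_eq_zero_iff_of_nonneg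
                  (fun x' _ => mul_nonneg (hπ.1 x') (hDnn x' z2))).1 hb
              exact h0 x (Finset.mem_univ x)
            rw [this]; ring
        · rw [hb]; ring
    _ = ∑ z2, RefObsAux.kl (π x * D x z2) (π x * q z2) := by
        rw [Finset.sum_comm]
        refine Finset.sum_congr rfl fun z2 _ => ?_
        calc ∑ z1, RefObsAux.kl ((π x * D x z2) * R z2 z1) ((π x * q z2) * R z2 z1)
            = ∑ z1, R z2 z1 * RefObsAux.kl (π x * D x z2) (π x * q z2) :=
              Finset.sum_congr rfl fun z1 _ =>
                RefObsAux.kl_mul_right _ _ _ (hR.1 z2 z1)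
          _ = _ := by rw [← Finset.sum_mul, hR.2 z2, one_mul]
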